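/- Let b, d be positive reals with d > b, and for η, K define T(η,K) = (1/b)·Σ_{j≥1} (b/d)^j · Σ_{k=1}^{⌊ηK⌋-1} 1/(k+j), the expected extinction time of a subcritical linear birth-death process started from ⌊ηK⌋ individuals. Then T(η,K)/log K → 1/(d-b) as K → ∞. -/

import Mathlib

open Filter

lemma myLog_ineq1 (x : ℝ) (hx : 0 < x) : Real.log (x+1) - Real.log x ≤ 1 / x := by
  have h := Real.log_le_sub_one_of_pos (x := (x+1)/x) (by positivity)
  rw [Real.log_div (by positivity) (ne_of_gt hx)] at h
  have h2 : (x+1)/x - 1 = 1/x := by field_simp; ring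
  linarith

lemma myLog_ineq2 (x : ℝ) (hx : 0 < x) : 1 / (x+1) ≤ Real.log (x+1) - Real.log x := by
  have h := Real.log_le_sub_one_of_pos (x := x/(x+1)) (by positivity)
  rw [Real.log_div (ne_of_gt hx) (by positivity)] at h
  have h2 : x/(x+1) - 1 = -(1/(x+1)) := by field_simp; ring
  linarith

lemma inner_sum_bounds (n j : ℕ) (hn : 1 ≤ n) :
    Real.log n - Real.log ((j:ℝ)+2) ≤ (∑ k ∈ Finset.Icc 1 (n-1), (1:ℝ)/((k:ℝ)+((j:ℝ)+1)))
    ∧ (∑ k ∈ Finset.Icc 1 (n-1), (1:ℝ)/((k:ℝ)+((j:ℝ)+1))) ≤ Real.log n := by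
  have hrange : (∑ k ∈ Finset.Icc 1 (n-1), (1:ℝ)/((k:ℝ)+((j:ℝ)+1)))
      = ∑ i ∈ Finset.range (n-1), (1:ℝ)/((i:ℝ)+(j:ℝ)+2) := by
    have hIc : Finset.Icc 1 (n-1) = Finset.Ico 1 n := by
      rw [← Finset.Ico_add_one_right_eq_Icc]; congr 1; omega
    rw [hIc, Finset.sum_Ico_eq_sum_range]
    refine Finset.sum_congr (by simp) fun i _ => ?_
    push_cast
    ring_nf
  have hn1 : ((n:ℝ) - 1) = ((n - 1 : ℕ) : ℝ) := by
    rw [Nat.cast_sub hn]; norm_num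
  constructor
  · -- lower bound
    have htele : ∑ i ∈ Finset.range (n-1),
        (Real.log ((i:ℝ)+1+(j:ℝ)+2) - Real.log ((i:ℝ)+(j:ℝ)+2))
        = Real.log (((n-1:ℕ):ℝ)+(j:ℝ)+2) - Real.log ((0:ℝ)+(j:ℝ)+2) := by
      have := Finset.sum_range_sub (fun i : ℕ => Real.log ((i:ℝ)+(j:ℝ)+2)) (n-1)
      simpa [Nat.cast_add, Nat.cast_one, add_comm, add_left_comm, add_assoc] using this
    have hterm : ∀ i ∈ Finset.range (n-1),
        Real.log ((i:ℝ)+1+(j:ℝ)+2) - Real.log ((i:ℝ)+(j:ℝ)+2) ≤ (1:ℝ)/((i:ℝ)+(j:ℝ)+2) := by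
      intro i _
      have := myLog_ineq1 ((i:ℝ)+(j:ℝ)+2) (by positivity)
      rw [show (i:ℝ)+1+(j:ℝ)+2 = ((i:ℝ)+(j:ℝ)+2)+1 from by ring]
      exact this
    have hsum := Finset.sum_le_sum hterm
    rw [htele] at hsum
    rw [hrange]
    have hmono : Real.log (n:ℝ) ≤ Real.log (((n-1:ℕ):ℝ)+(j:ℝ)+2) := by
      apply Real.log_le_log (by exact_mod_cast hn)
      rw [← hn1]; push_cast; linarith [Nat.cast_nonneg (α := ℝ) j]
    have : Real.log ((0:ℝ)+(j:ℝ)+2) = Real.log ((j:ℝ)+2) := by ring_nf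
    linarith
  · -- upper bound
    have htele : ∑ i ∈ Finset.range (n-1),
        (Real.log ((i:ℝ)+1+(j:ℝ)+1) - Real.log ((i:ℝ)+(j:ℝ)+1))
        = Real.log (((n-1:ℕ):ℝ)+(j:ℝ)+1) - Real.log ((0:ℝ)+(j:ℝ)+1) := by
      have := Finset.sum_range_sub (fun i : ℕ => Real.log ((i:ℝ)+(j:ℝ)+1)) (n-1)
      simpa [Nat.cast_add, Nat.cast_one, add_comm, add_left_comm, add_assoc] using this
    have hterm : ∀ i ∈ Finset.range (n-1),
        (1:ℝ)/((i:ℝ)+(j:ℝ)+2) ≤ Real.log ((i:ℝ)+1+(j:ℝ)+1) - Real.log ((i:ℝ)+(j:ℝ)+1) := by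
      intro i _
      have := myLog_ineq2 ((i:ℝ)+(j:ℝ)+1) (by positivity)
      rw [show (i:ℝ)+1+(j:ℝ)+1 = ((i:ℝ)+(j:ℝ)+1)+1 from by ring,
        show (1:ℝ)/((i:ℝ)+(j:ℝ)+2) = 1/(((i:ℝ)+(j:ℝ)+1)+1) from by ring_nf]
      exact this
    have hsum := Finset.sum_le_sum hterm
    rw [htele] at hsum
    rw [hrange]
    have hfin : Real.log (((n-1:ℕ):ℝ)+(j:ℝ)+1) - Real.log ((0:ℝ)+(j:ℝ)+1) ≤ Real.log n := by
      have h1 : Real.log (((n-1:ℕ):ℝ)+(j:ℝ)+1) ≤ Real.log ((n:ℝ)*((j:ℝ)+1)) := by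
        apply Real.log_le_log (by rw [← hn1]; push_cast; linarith [Nat.cast_nonneg (α := ℝ) j])
        rw [← hn1]
        have hnn : (1:ℝ) ≤ (n:ℝ) := by exact_mod_cast hn
        nlinarith [Nat.cast_nonneg (α := ℝ) j]
      rw [Real.log_mul (by positivity) (by positivity)] at h1
      have : Real.log ((0:ℝ)+(j:ℝ)+1) = Real.log ((j:ℝ)+1) := by ring_nf
      linarith
    linarith

lemma geom_summable {r : ℝ} (hr0 : 0 < r) (hr1 : r < 1) :
    Summable (fun j : ℕ => r^(j+1)) := by
  simpa [pow_succ] using (summable_geometric_of_lt_one hr0.le hr1).mul_right r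

lemma geom_tsum {r : ℝ} (hr0 : 0 < r) (hr1 : r < 1) :
    ∑' j : ℕ, r^(j+1) = r/(1-r) := by
  have : ∑' j : ℕ, r^(j+1) = (∑' j : ℕ, r^j) * r := by
    rw [← tsum_mul_right]; exact tsum_congr fun j => (pow_succ r j)
  rw [this, tsum_geometric_of_lt_one hr0.le hr1]
  field_simp

lemma logterm_summable {r : ℝ} (hr0 : 0 < r) (hr1 : r < 1) :
    Summable (fun j : ℕ => r^(j+1) * Real.log ((j:ℝ)+2)) := by
  have hg : Summable (fun j : ℕ => ((j:ℝ)+2) * r^(j+1)) := by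
    have h1 : Summable (fun j : ℕ => ((j:ℝ) * r^j) * r) :=
      (summable_pow_mul_geometric_of_norm_lt_one 1
        (by rwa [Real.norm_eq_abs, abs_of_pos hr0])).mul_right r |>.congr
        (fun j => by simp)
    have h2 : Summable (fun j : ℕ => (2:ℝ) * (r^j * r)) :=
      ((summable_geometric_of_lt_one hr0.le hr1).mul_right r).mul_left 2
    exact (h1.add h2).congr (fun j => by rw [pow_succ]; ring)
  refine Summable.of_nonneg_of_le (fun j => ?_) (fun j => ?_) hg
  · exact mul_nonneg (by positivity) (Real.log_nonneg (by linarith [Nat.cast_nonneg (α:=ℝ) j]))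
  · have h1 : Real.log ((j:ℝ)+2) ≤ (j:ℝ)+2 := Real.log_le_self (by positivity)
    have h2 : (0:ℝ) ≤ r^(j+1) := by positivity
    nlinarith

lemma tsum_bounds {r : ℝ} (hr0 : 0 < r) (hr1 : r < 1) (n : ℕ) (hn : 1 ≤ n) :
    (r/(1-r)) * Real.log n - (∑' j : ℕ, r^(j+1) * Real.log ((j:ℝ)+2)) ≤
      (∑' j : ℕ, r^(j+1) * ∑ k ∈ Finset.Icc 1 (n-1), (1:ℝ)/((k:ℝ)+((j:ℝ)+1)))
    ∧ (∑' j : ℕ, r^(j+1) * ∑ k ∈ Finset.Icc 1 (n-1), (1:ℝ)/((k:ℝ)+((j:ℝ)+1)))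
      ≤ (r/(1-r)) * Real.log n := by
  have hlogn : (0:ℝ) ≤ Real.log n := Real.log_nonneg (by exact_mod_cast hn)
  have hup : Summable (fun j : ℕ => r^(j+1) * Real.log n) :=
    (geom_summable hr0 hr1).mul_right _
  have hupsum : ∑' j : ℕ, r^(j+1) * Real.log n = (r/(1-r)) * Real.log n := by
    rw [tsum_mul_right, geom_tsum hr0 hr1]
  have hT : Summable (fun j : ℕ => r^(j+1) *
      ∑ k ∈ Finset.Icc 1 (n-1), (1:ℝ)/((k:ℝ)+((j:ℝ)+1))) := by
    refine Summable.of_nonneg_of_le (fun j => ?_) (fun j => ?_) hup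
    · refine mul_nonneg (by positivity) (Finset.sum_nonneg fun k _ => by positivity)
    · exact mul_le_mul_of_nonneg_left (inner_sum_bounds n j hn).2 (by positivity)
  constructor
  · have hlo : Summable (fun j : ℕ => r^(j+1) * Real.log n
        - r^(j+1) * Real.log ((j:ℝ)+2)) := hup.sub (logterm_summable hr0 hr1)
    have := Summable.tsum_le_tsum (f := fun j : ℕ => r^(j+1) * Real.log n
        - r^(j+1) * Real.log ((j:ℝ)+2)) (fun j => by
          have h := (inner_sum_bounds n j hn).1
          have h2 : (0:ℝ) ≤ r^(j+1) := by positivity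
          nlinarith) hlo hT
    rwa [Summable.tsum_sub hup (logterm_summable hr0 hr1), hupsum] at this
  · have := Summable.tsum_le_tsum (g := fun j : ℕ => r^(j+1) * Real.log n) (fun j =>
      mul_le_mul_of_nonneg_left (inner_sum_bounds n j hn).2 (by positivity)) hT hup
    rwa [hupsum] at this

lemma log_floor_ratio (η : ℝ) (hη : 0 < η) :
    Tendsto (fun K : ℕ => Real.log (⌊η * (K:ℝ)⌋₊ : ℝ) / Real.log K) atTop (nhds 1) := by
  have hlogtop : Tendsto (fun K : ℕ => Real.log K) atTop atTop :=
    Real.tendsto_log_atTop.comp tendsto_natCast_atTop_atTop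
  have hlow : Tendsto (fun K : ℕ => Real.log (η/2) / Real.log K + 1) atTop (nhds 1) := by
    simpa using (tendsto_const_nhds.div_atTop hlogtop).add
      (tendsto_const_nhds (x := (1:ℝ)))
  have hup : Tendsto (fun K : ℕ => Real.log η / Real.log K + 1) atTop (nhds 1) := by
    simpa using (tendsto_const_nhds.div_atTop hlogtop).add
      (tendsto_const_nhds (x := (1:ℝ)))
  refine tendsto_of_tendsto_of_tendsto_of_le_of_le' hlow hup ?_ ?_
  · filter_upwards [eventually_ge_atTop (max 2 ⌈2/η⌉₊)] with K hK
    have hK2 : (2:ℕ) ≤ K := le_trans (le_max_left _ _) hK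
    have hKr : (2:ℝ)/η ≤ K := by
      have := le_trans (le_max_right 2 ⌈2/η⌉₊) hK
      exact (Nat.ceil_le.mp this)
    have hKpos : (0:ℝ) < K := by positivity
    have hηK : (2:ℝ) ≤ η * K := by
      rw [div_le_iff₀ hη] at hKr; linarith
    have hfl_ge : η * K / 2 ≤ (⌊η * (K:ℝ)⌋₊ : ℝ) := by
      have := Nat.sub_one_lt_floor (η * K)
      linarith
    have hflpos : (0:ℝ) < (⌊η * (K:ℝ)⌋₊ : ℝ) := by linarith
    have hlogK : (0:ℝ) < Real.log K := Real.log_pos (by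
      have : (2:ℝ) ≤ K := by exact_mod_cast hK2
      linarith)
    have h1 : Real.log (η/2) + Real.log K ≤ Real.log (⌊η * (K:ℝ)⌋₊ : ℝ) := by
      rw [← Real.log_mul (by positivity) (ne_of_gt hKpos)]
      apply Real.log_le_log (by positivity)
      calc η/2 * K = η * K / 2 := by ring
        _ ≤ _ := hfl_ge
    calc Real.log (η/2) / Real.log K + 1 = (Real.log (η/2) + Real.log K) / Real.log K := by
          rw [add_div, div_self (ne_of_gt hlogK)]
      _ ≤ _ := by gcongr
  · filter_upwards [eventually_ge_atTop (max 2 ⌈2/η⌉₊)] with K hK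
    have hK2 : (2:ℕ) ≤ K := le_trans (le_max_left _ _) hK
    have hKr : (2:ℝ)/η ≤ K := Nat.ceil_le.mp (le_trans (le_max_right 2 ⌈2/η⌉₊) hK)
    have hKpos : (0:ℝ) < K := by positivity
    have hηK : (2:ℝ) ≤ η * K := by rw [div_le_iff₀ hη] at hKr; linarith
    have hfl_ge : η * K / 2 ≤ (⌊η * (K:ℝ)⌋₊ : ℝ) := by
      have := Nat.sub_one_lt_floor (η * K); linarith
    have hflpos : (0:ℝ) < (⌊η * (K:ℝ)⌋₊ : ℝ) := by linarith
    have hlogK : (0:ℝ) < Real.log K := Real.log_pos (by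
      have : (2:ℝ) ≤ K := by exact_mod_cast hK2
      linarith)
    have h1 : Real.log (⌊η * (K:ℝ)⌋₊ : ℝ) ≤ Real.log η + Real.log K := by
      rw [← Real.log_mul (ne_of_gt hη) (ne_of_gt hKpos)]
      exact Real.log_le_log hflpos (Nat.floor_le (by positivity))
    calc Real.log (⌊η * (K:ℝ)⌋₊ : ℝ) / Real.log K
        ≤ (Real.log η + Real.log K) / Real.log K := by gcongr
      _ = Real.log η / Real.log K + 1 := by rw [add_div, div_self (ne_of_gt hlogK)]



/-- The expected extinction time of a subcritical linear birth-death process (rates b < d)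
started from ⌊ηK⌋ individuals, T(η,K) = (1/b) Σ_{j≥1} (b/d)^j Σ_{k=1}^{⌊ηK⌋-1} 1/(k+j),
satisfies T(η,K)/log K → 1/(d-b) as K → ∞. -/
theorem extinction_time_log_asymptotics
    (b d η : ℝ) (hb : 0 < b) (hbd : b < d) (hη : 0 < η) :
    Tendsto
      (fun K : ℕ =>
        ((1 / b) * ∑' j : ℕ,
            (b / d) ^ (j + 1) *
              ∑ k ∈ Finset.Icc 1 (⌊η * (K : ℝ)⌋₊ - 1), (1 : ℝ) / ((k : ℝ) + (j + 1)))
          / Real.log K)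
      atTop (nhds (1 / (d - b))) := by
  have hd : 0 < d := hb.trans hbd
  have hdb : 0 < d - b := by linarith
  have hr0 : 0 < b / d := by positivity
  have hr1 : b / d < 1 := by rw [div_lt_one hd]; exact hbd
  set C : ℝ := ∑' j : ℕ, (b/d)^(j+1) * Real.log ((j:ℝ)+2) with hC
  have key : (1/b) * ((b/d)/(1-b/d)) = 1/(d-b) := by
    field_simp
  have hlogtop : Tendsto (fun K : ℕ => Real.log K) atTop atTop :=
    Real.tendsto_log_atTop.comp tendsto_natCast_atTop_atTop
  have hratio := log_floor_ratio η hη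
  have hlowT : Tendsto (fun K : ℕ =>
      (1/(d-b)) * (Real.log (⌊η * (K:ℝ)⌋₊ : ℝ) / Real.log K) - (C/b) / Real.log K)
      atTop (nhds (1/(d-b))) := by
    have := (hratio.const_mul (1/(d-b))).sub
      ((tendsto_const_nhds (x := C/b)).div_atTop hlogtop)
    simpa using this
  have hupT : Tendsto (fun K : ℕ =>
      (1/(d-b)) * (Real.log (⌊η * (K:ℝ)⌋₊ : ℝ) / Real.log K)) atTop (nhds (1/(d-b))) := by
    have := hratio.const_mul (1/(d-b))
    simpa using this
  have e1 : ∀ L M : ℝ, ((1/b)*(((b/d)/(1-b/d))*L - C))/M = (1/(d-b))*(L/M) - (C/b)/M := by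
    intro L M; rw [← key]; ring
  have e2 : ∀ L M : ℝ, ((1/b)*(((b/d)/(1-b/d))*L))/M = (1/(d-b))*(L/M) := by
    intro L M; rw [← key]; ring
  refine tendsto_of_tendsto_of_tendsto_of_le_of_le' hlowT hupT ?_ ?_
  · filter_upwards [eventually_ge_atTop (max 2 ⌈2/η⌉₊)] with K hK
    have hK2 : (2:ℕ) ≤ K := le_trans (le_max_left _ _) hK
    have hKr : (2:ℝ)/η ≤ K := Nat.ceil_le.mp (le_trans (le_max_right 2 ⌈2/η⌉₊) hK)
    have hKpos : (0:ℝ) < K := by positivity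
    have hηK : (2:ℝ) ≤ η * K := by rw [div_le_iff₀ hη] at hKr; linarith
    have hn1 : 1 ≤ ⌊η * (K:ℝ)⌋₊ := Nat.le_floor (by push_cast; linarith)
    have hlogK : (0:ℝ) < Real.log K := Real.log_pos (by
      have : (2:ℝ) ≤ K := by exact_mod_cast hK2
      linarith)
    have hlow := (tsum_bounds hr0 hr1 (⌊η * (K:ℝ)⌋₊) hn1).1
    rw [← e1]
    gcongr
  · filter_upwards [eventually_ge_atTop (max 2 ⌈2/η⌉₊)] with K hK
    have hK2 : (2:ℕ) ≤ K := le_trans (le_max_left _ _) hK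
    have hKr : (2:ℝ)/η ≤ K := Nat.ceil_le.mp (le_trans (le_max_right 2 ⌈2/η⌉₊) hK)
    have hKpos : (0:ℝ) < K := by positivity
    have hηK : (2:ℝ) ≤ η * K := by rw [div_le_iff₀ hη] at hKr; linarith
    have hn1 : 1 ≤ ⌊η * (K:ℝ)⌋₊ := Nat.le_floor (by push_cast; linarith)
    have hlogK : (0:ℝ) < Real.log K := Real.log_pos (by
      have : (2:ℝ) ≤ K := by exact_mod_cast hK2
      linarith)
    have hup := (tsum_bounds hr0 hr1 (⌊η * (K:ℝ)⌋₊) hn1).2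
    rw [← e2]
    gcongr
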